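/- Two infinitesimal deformations (μ_1, ν_1, ρ_1, ψ_1) and (μ_1', ν_1', ρ_1', ψ_1') of a matched pair of Lie algebras (𝔤, 𝔥, ρ, ψ) are equivalent (via maps of the form (id_𝔤 + tf, id_𝔥 + tg)) if and only if the corresponding 2-cocycles (μ_1 ⋉ ρ_1, ψ_1 ⋊ ν_1) and (μ_1' ⋉ ρ_1', ψ_1' ⋊ ν_1') are cohomologous; their difference equals δ_MPL((f,g)). Hence equivalence classes of infinitesimal deformations of (𝔤, 𝔥, ρ, ψ) are in bijection with H²_MPL(𝔤, 𝔥, ρ, ψ). -/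

import Mathlib

/-- A bilinear map given as a plain two-argument function. -/
def Bilin (k : Type*) [Field k] {A B C : Type*} [AddCommGroup A] [Module k A]
    [AddCommGroup B] [Module k B] [AddCommGroup C] [Module k C] (f : A → B → C) : Prop :=
  (∀ a a' b, f (a + a') b = f a b + f a' b) ∧
  (∀ (c : k) (a : A) (b : B), f (c • a) b = c • f a b) ∧
  (∀ a b b', f a (b + b') = f a b + f a b') ∧
  (∀ (c : k) (a : A) (b : B), f a (c • b) = c • f a b)

/-- A Lie algebra structure on `A`, given by a bilinear, alternating bracket
satisfying the Jacobi identity. -/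
def IsLieBracketP (k : Type*) [Field k] {A : Type*} [AddCommGroup A] [Module k A]
    (μ : A → A → A) : Prop :=
  Bilin k μ ∧ (∀ x, μ x x = 0) ∧
  (∀ x y z, μ (μ x y) z + μ (μ y z) x + μ (μ z x) y = 0)

/-- `ρ` is a representation (action map) of the Lie algebra `(A, μ)` on `B`. -/
def IsRepP (k : Type*) [Field k] {A B : Type*} [AddCommGroup A] [Module k A]
    [AddCommGroup B] [Module k B] (μ : A → A → A) (ρ : A → B → B) : Prop :=
  Bilin k ρ ∧ ∀ x y h, ρ (μ x y) h = ρ x (ρ y h) - ρ y (ρ x h)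

/-- A matched pair of Lie algebras `(𝔤, 𝔥, ρ, ψ)`. -/
def IsMatchedPairP (k : Type*) [Field k] {G H : Type*} [AddCommGroup G] [Module k G]
    [AddCommGroup H] [Module k H]
    (μ : G → G → G) (ν : H → H → H) (ρ : G → H → H) (ψ : H → G → G) : Prop :=
  IsLieBracketP k μ ∧ IsLieBracketP k ν ∧ IsRepP k μ ρ ∧ IsRepP k ν ψ ∧
  (∀ x h h', ρ x (ν h h') = ν (ρ x h) h' + ν h (ρ x h') + ρ (ψ h' x) h - ρ (ψ h x) h') ∧
  (∀ h x y, ψ h (μ x y) = μ (ψ h x) y + μ x (ψ h y) + ψ (ρ y h) x - ψ (ρ x h) y)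

/-- The bicrossed product bracket on `G × H` associated with the data `(μ, ν, ρ, ψ)`. -/
def bicross {G H : Type*} [AddCommGroup G] [AddCommGroup H]
    (μ : G → G → G) (ν : H → H → H) (ρ : G → H → H) (ψ : H → G → G) :
    G × H → G × H → G × H :=
  fun a b => (μ a.1 b.1 + ψ a.2 b.1 - ψ b.2 a.1, ν a.2 b.2 + ρ a.1 b.2 - ρ b.1 a.2)

/-- The insertion operation `i_f g` of the Nijenhuis-Richardson calculus:
`(i_f g)(x₁,…,x_{m+n+1}) = Σ_{σ ∈ Sh(m+1,n)} (−1)^σ g(f(x_{σ(1)},…,x_{σ(m+1)}), x_{σ(m+2)},…)`. -/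
noncomputable def insNR {G : Type*} [AddCommGroup G]
    (m n : ℕ) (f : (Fin (m+1) → G) → G) (g : (Fin (n+1) → G) → G) :
    (Fin (m+n+1) → G) → G :=
  fun x => ∑ σ : Equiv.Perm (Fin (m+n+1)),
    if (∀ i j : Fin (m+n+1), i < j → ((j : ℕ) < m+1 ∨ m+1 ≤ (i : ℕ)) → σ i < σ j) then
      ((Equiv.Perm.sign σ : ℤ)) •
        g (Fin.cons (f (fun i => x (σ ⟨i, by omega⟩)))
            (fun i : Fin n => x (σ ⟨m+1+(i:ℕ), by omega⟩)))
    else 0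

/-- The Nijenhuis-Richardson bracket `[f,g]_NR = i_f g − (−1)^{mn} i_g f` of
`f ∈ Hom(Λ^{m+1}G, G)` (degree `m`) and `g ∈ Hom(Λ^{n+1}G, G)` (degree `n`). -/
noncomputable def nrB {G : Type*} [AddCommGroup G]
    (m n : ℕ) (f : (Fin (m+1) → G) → G) (g : (Fin (n+1) → G) → G) :
    (Fin (m+n+1) → G) → G :=
  fun x => insNR m n f g x - ((-1 : ℤ)^(m*n)) • insNR n m g f (fun i => x ⟨i, by omega⟩)

/-- `f` is a skew-symmetric multilinear map (an element of `Hom(Λ^n G, G)`). -/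
def IsMultAlt (k : Type*) [Field k] {G : Type*} [AddCommGroup G] [Module k G]
    (n : ℕ) (f : (Fin n → G) → G) : Prop :=
  (∀ (x : Fin n → G) (i : Fin n) (a b : G),
      f (Function.update x i (a + b)) = f (Function.update x i a) + f (Function.update x i b)) ∧
  (∀ (x : Fin n → G) (i : Fin n) (c : k) (a : G),
      f (Function.update x i (c • a)) = c • f (Function.update x i a)) ∧
  (∀ (x : Fin n → G) (i j : Fin n), i ≠ j → x i = x j → f x = 0)

/-- The arity-2 cochain on `𝔤 ⊕ 𝔥` encoding the quadruple `(μ, ν, ρ, ψ)`: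
`π = (μ ⋉ ρ) + (ψ ⋊ ν)`. -/
def mcElt {G H : Type*} [AddCommGroup G] [AddCommGroup H]
    (μ : G → G → G) (ν : H → H → H) (ρ : G → H → H) (ψ : H → G → G) :
    (Fin 2 → G × H) → G × H :=
  fun x => bicross μ ν ρ ψ (x 0) (x 1)

/-- The `𝐤[t]/(t²)`-bilinear extension of `μ + t μ₁` on `G[t]/(t²) ≅ G × G`
(an element `a + t b` is represented by the pair `(a, b)`). -/
def deform {A B C : Type*} [AddCommGroup A] [AddCommGroup B] [AddCommGroup C]
    (f : A → B → C) (f₁ : A → B → C) : A × A → B × B → C × C :=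
  fun a b => (f a.1 b.1, f a.1 b.2 + f a.2 b.1 + f₁ a.1 b.1)

/-- A quadruple of candidate deformation/cocycle data. -/
abbrev Quad (G H : Type*) := (G → G → G) × (H → H → H) × (G → H → H) × (H → G → G)

/-- The quadruple consists of bilinear maps, with skew-symmetric first and second entries. -/
def QuadBil (k : Type*) [Field k] {G H : Type*} [AddCommGroup G] [Module k G]
    [AddCommGroup H] [Module k H] (q : Quad G H) : Prop :=
  Bilin k q.1 ∧ Bilin k q.2.1 ∧ Bilin k q.2.2.1 ∧ Bilin k q.2.2.2 ∧
  (∀ x, q.1 x x = 0) ∧ (∀ h, q.2.1 h h = 0)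

/-- `q = (μ₁, ν₁, ρ₁, ψ₁)` is an infinitesimal deformation of the matched pair
`(μ, ν, ρ, ψ)`: the `t`-deformed structure is a matched pair over `𝐤[t]/(t²)`. -/
def IsInfDef (k : Type*) [Field k] {G H : Type*} [AddCommGroup G] [Module k G]
    [AddCommGroup H] [Module k H]
    (μ : G → G → G) (ν : H → H → H) (ρ : G → H → H) (ψ : H → G → G)
    (q : Quad G H) : Prop :=
  QuadBil k q ∧
  IsMatchedPairP k (deform μ q.1) (deform ν q.2.1) (deform ρ q.2.2.1) (deform ψ q.2.2.2)

/-- `q` is a `2`-cocycle of the matched pair `(μ, ν, ρ, ψ)`. -/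
def IsCocycleMPL (k : Type*) [Field k] {G H : Type*} [AddCommGroup G] [Module k G]
    [AddCommGroup H] [Module k H]
    (μ : G → G → G) (ν : H → H → H) (ρ : G → H → H) (ψ : H → G → G)
    (q : Quad G H) : Prop :=
  QuadBil k q ∧
  ∀ x : Fin 3 → G × H, nrB 1 1 (mcElt μ ν ρ ψ) (mcElt q.1 q.2.1 q.2.2.1 q.2.2.2) x = 0

/-- Two infinitesimal deformations are equivalent if `(id + tf, id + tg)` is a morphism of
the deformed matched pairs over `𝐤[t]/(t²)`. -/
def DefEquiv (k : Type*) [Field k] {G H : Type*} [AddCommGroup G] [Module k G]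
    [AddCommGroup H] [Module k H]
    (μ : G → G → G) (ν : H → H → H) (ρ : G → H → H) (ψ : H → G → G)
    (q q' : Quad G H) : Prop :=
  ∃ f : G →ₗ[k] G, ∃ g : H →ₗ[k] H,
    (∀ a b, (fun p : G × G => (p.1, p.2 + f p.1)) (deform μ q.1 a b) =
      deform μ q'.1 (a.1, a.2 + f a.1) (b.1, b.2 + f b.1)) ∧
    (∀ a b, (fun p : H × H => (p.1, p.2 + g p.1)) (deform ν q.2.1 a b) =
      deform ν q'.2.1 (a.1, a.2 + g a.1) (b.1, b.2 + g b.1)) ∧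
    (∀ a b, (fun p : H × H => (p.1, p.2 + g p.1)) (deform ρ q.2.2.1 a b) =
      deform ρ q'.2.2.1 (a.1, a.2 + f a.1) (b.1, b.2 + g b.1)) ∧
    (∀ a b, (fun p : G × G => (p.1, p.2 + f p.1)) (deform ψ q.2.2.2 a b) =
      deform ψ q'.2.2.2 (a.1, a.2 + g a.1) (b.1, b.2 + f b.1))

/-- Two `2`-cocycles are cohomologous: their difference is `δ_MPL((f, g))`. -/
def CohomologousMPL (k : Type*) [Field k] {G H : Type*} [AddCommGroup G] [Module k G]
    [AddCommGroup H] [Module k H]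
    (μ : G → G → G) (ν : H → H → H) (ρ : G → H → H) (ψ : H → G → G)
    (q q' : Quad G H) : Prop :=
  ∃ f : G →ₗ[k] G, ∃ g : H →ₗ[k] H,
    (∀ x y, q.1 x y - q'.1 x y = μ x (f y) - f (μ x y) + μ (f x) y) ∧
    (∀ h h', q.2.1 h h' - q'.2.1 h h' = ν h (g h') - g (ν h h') + ν (g h) h') ∧
    (∀ x h, q.2.2.1 x h - q'.2.2.1 x h = ρ x (g h) - g (ρ x h) + ρ (f x) h) ∧
    (∀ h x, q.2.2.2 h x - q'.2.2.2 h x = ψ h (f x) - f (ψ h x) + ψ (g h) x)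

section Helpers

variable {k : Type*} [Field k] {A B C : Type*} [AddCommGroup A] [Module k A]
    [AddCommGroup B] [Module k B] [AddCommGroup C] [Module k C]

lemma Bilin.zl {f : A → B → C} (h : Bilin k f) (b : B) : f 0 b = 0 := by
  have := h.1 0 0 b; simpa using this.symm

lemma Bilin.zr {f : A → B → C} (h : Bilin k f) (a : A) : f a 0 = 0 := by
  have := h.2.2.1 a 0 0; simpa using this.symm

lemma Bilin.nl {f : A → B → C} (h : Bilin k f) (a : A) (b : B) : f (-a) b = - f a b := by
  have := h.1 a (-a) b; rw [add_neg_cancel, h.zl] at this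
  exact (neg_eq_of_add_eq_zero_right this.symm).symm

lemma Bilin.nr {f : A → B → C} (h : Bilin k f) (a : A) (b : B) : f a (-b) = - f a b := by
  have := h.2.2.1 a b (-b); rw [add_neg_cancel, h.zr] at this
  exact (neg_eq_of_add_eq_zero_right this.symm).symm

lemma Bilin.sl {f : A → B → C} (h : Bilin k f) (a a' : A) (b : B) :
    f (a - a') b = f a b - f a' b := by
  rw [sub_eq_add_neg, h.1, h.nl, sub_eq_add_neg]

lemma Bilin.sr {f : A → B → C} (h : Bilin k f) (a : A) (b b' : B) :
    f a (b - b') = f a b - f a b' := by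
  rw [sub_eq_add_neg, h.2.2.1, h.nr, sub_eq_add_neg]

lemma Bilin.anti {f : A → A → A} (h : Bilin k f) (halt : ∀ a, f a a = 0) (a b : A) :
    f a b = - f b a := by
  have h0 := halt (a + b)
  rw [h.1, h.2.2.1, h.2.2.1, halt a, halt b, zero_add, add_zero] at h0
  exact eq_neg_of_add_eq_zero_left h0

end Helpers
section Part1

variable {k : Type*} [Field k] {G H : Type*} [AddCommGroup G] [Module k G]
    [AddCommGroup H] [Module k H]

lemma defEquiv_iff_cohomologous
    (μ : G → G → G) (ν : H → H → H) (ρ : G → H → H) (ψ : H → G → G)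
    (hmp : IsMatchedPairP k μ ν ρ ψ) (q q' : Quad G H) :
    DefEquiv k μ ν ρ ψ q q' ↔ CohomologousMPL k μ ν ρ ψ q q' := by
  obtain ⟨⟨hμ, -, -⟩, ⟨hν, -, -⟩, ⟨hρ, -⟩, ⟨hψ, -⟩, -, -⟩ := hmp
  constructor
  · rintro ⟨f, g, h1, h2, h3, h4⟩
    refine ⟨f, g, fun x y => ?_, fun x y => ?_, fun x y => ?_, fun x y => ?_⟩
    · have h := congrArg Prod.snd (h1 (x, 0) (y, 0))
      simp only [deform, hμ.zr, hμ.zl, zero_add, add_zero] at h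
      rw [← sub_eq_zero]; rw [← sub_eq_zero.mpr h]; abel
    · have h := congrArg Prod.snd (h2 (x, 0) (y, 0))
      simp only [deform, hν.zr, hν.zl, zero_add, add_zero] at h
      rw [← sub_eq_zero]; rw [← sub_eq_zero.mpr h]; abel
    · have h := congrArg Prod.snd (h3 (x, 0) (y, 0))
      simp only [deform, hρ.zr, hρ.zl, zero_add, add_zero] at h
      rw [← sub_eq_zero]; rw [← sub_eq_zero.mpr h]; abel
    · have h := congrArg Prod.snd (h4 (x, 0) (y, 0))
      simp only [deform, hψ.zr, hψ.zl, zero_add, add_zero] at h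
      rw [← sub_eq_zero]; rw [← sub_eq_zero.mpr h]; abel
  · rintro ⟨f, g, c1, c2, c3, c4⟩
    refine ⟨f, g, fun a b => ?_, fun a b => ?_, fun a b => ?_, fun a b => ?_⟩
    · simp only [deform, Prod.mk.injEq]
      refine ⟨trivial, ?_⟩
      have h := c1 a.1 b.1
      rw [hμ.2.2.1, hμ.1]
      rw [← sub_eq_zero]; rw [← sub_eq_zero.mpr h]; abel
    · simp only [deform, Prod.mk.injEq]
      refine ⟨trivial, ?_⟩
      have h := c2 a.1 b.1
      rw [hν.2.2.1, hν.1]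
      rw [← sub_eq_zero]; rw [← sub_eq_zero.mpr h]; abel
    · simp only [deform, Prod.mk.injEq]
      refine ⟨trivial, ?_⟩
      have h := c3 a.1 b.1
      rw [hρ.2.2.1, hρ.1]
      rw [← sub_eq_zero]; rw [← sub_eq_zero.mpr h]; abel
    · simp only [deform, Prod.mk.injEq]
      refine ⟨trivial, ?_⟩
      have h := c4 a.1 b.1
      rw [hψ.2.2.1, hψ.1]
      rw [← sub_eq_zero]; rw [← sub_eq_zero.mpr h]; abel

end Part1
section E1

variable {k : Type*} [Field k] {G H : Type*} [AddCommGroup G] [Module k G]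
    [AddCommGroup H] [Module k H]

private lemma comb0 {M : Type*} [AddCommGroup M] {u v : M} (h1 : u = 0) (h2 : v = 0) :
    u + v = 0 := by rw [h1, h2, add_zero]

lemma matched_iff_bicross (μ : G → G → G) (ν : H → H → H) (ρ : G → H → H) (ψ : H → G → G) :
    IsMatchedPairP k μ ν ρ ψ ↔
      (Bilin k μ ∧ Bilin k ν ∧ Bilin k ρ ∧ Bilin k ψ ∧ (∀ x, μ x x = 0) ∧ (∀ h, ν h h = 0) ∧
        IsLieBracketP k (bicross μ ν ρ ψ)) := by
  constructor
  · rintro ⟨⟨hμ, haltμ, hjacμ⟩, ⟨hν, haltν, hjacν⟩, ⟨hρ, hrepρ⟩, ⟨hψ, hrepψ⟩, hc1, hc2⟩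
    have antiμ : ∀ u v : G, μ u v + μ v u = 0 := fun u v => by
      rw [hμ.anti haltμ u v]; abel
    have antiν : ∀ u v : H, ν u v + ν v u = 0 := fun u v => by
      rw [hν.anti haltν u v]; abel
    refine ⟨hμ, hν, hρ, hψ, haltμ, haltν, ?_, ?_, ?_⟩
    · -- Bilin of bicross
      refine ⟨fun a a' b => ?_, fun c a b => ?_, fun a b b' => ?_, fun c a b => ?_⟩
      · simp only [bicross, Prod.fst_add, Prod.snd_add, Prod.mk_add_mk, Prod.mk.injEq,
          hμ.1, hμ.2.2.1, hν.1, hν.2.2.1, hρ.1, hρ.2.2.1, hψ.1, hψ.2.2.1]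
        constructor <;> abel
      · simp only [bicross, Prod.smul_fst, Prod.smul_snd, Prod.smul_mk, Prod.mk.injEq,
          hμ.2.1, hμ.2.2.2, hν.2.1, hν.2.2.2, hρ.2.1, hρ.2.2.2, hψ.2.1, hψ.2.2.2,
          smul_add, smul_sub]
      · simp only [bicross, Prod.fst_add, Prod.snd_add, Prod.mk_add_mk, Prod.mk.injEq,
          hμ.1, hμ.2.2.1, hν.1, hν.2.2.1, hρ.1, hρ.2.2.1, hψ.1, hψ.2.2.1]
        constructor <;> abel
      · simp only [bicross, Prod.smul_fst, Prod.smul_snd, Prod.smul_mk, Prod.mk.injEq,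
          hμ.2.1, hμ.2.2.2, hν.2.1, hν.2.2.2, hρ.2.1, hρ.2.2.2, hψ.2.1, hψ.2.2.2,
          smul_add, smul_sub]
    · -- alternating
      intro a
      simp only [bicross, Prod.mk_eq_zero]
      constructor
      · rw [haltμ]; abel
      · rw [haltν]; abel
    · -- Jacobi
      rintro ⟨x1, h1⟩ ⟨x2, h2⟩ ⟨x3, h3⟩
      simp only [bicross, Prod.mk_add_mk, Prod.mk.injEq,
        hμ.1, hμ.2.2.1, hμ.sl, hμ.sr, hν.1, hν.2.2.1, hν.sl, hν.sr,
        hρ.1, hρ.2.2.1, hρ.sl, hρ.sr, hψ.1, hψ.2.2.1, hψ.sl, hψ.sr,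
        Prod.mk_eq_zero]
      constructor
      · have total :=
          comb0 (hjacμ x1 x2 x3)
          (comb0 (sub_eq_zero.mpr (hrepψ h1 h2 x3))
          (comb0 (sub_eq_zero.mpr (hrepψ h2 h3 x1))
          (comb0 (sub_eq_zero.mpr (hrepψ h3 h1 x2))
          (comb0 (neg_eq_zero.mpr (sub_eq_zero.mpr (hc2 h3 x1 x2)))
          (comb0 (neg_eq_zero.mpr (sub_eq_zero.mpr (hc2 h1 x2 x3)))
          (comb0 (neg_eq_zero.mpr (sub_eq_zero.mpr (hc2 h2 x3 x1)))
          (comb0 (neg_eq_zero.mpr (antiμ (ψ h1 x3) x2))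
          (comb0 (neg_eq_zero.mpr (antiμ (ψ h2 x1) x3))
                 (neg_eq_zero.mpr (antiμ (ψ h3 x2) x1))))))))))
        rw [← total]; abel
      · have total :=
          comb0 (hjacν h1 h2 h3)
          (comb0 (sub_eq_zero.mpr (hrepρ x1 x2 h3))
          (comb0 (sub_eq_zero.mpr (hrepρ x2 x3 h1))
          (comb0 (sub_eq_zero.mpr (hrepρ x3 x1 h2))
          (comb0 (neg_eq_zero.mpr (sub_eq_zero.mpr (hc1 x3 h1 h2)))
          (comb0 (neg_eq_zero.mpr (sub_eq_zero.mpr (hc1 x1 h2 h3)))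
          (comb0 (neg_eq_zero.mpr (sub_eq_zero.mpr (hc1 x2 h3 h1)))
          (comb0 (neg_eq_zero.mpr (antiν (ρ x1 h3) h2))
          (comb0 (neg_eq_zero.mpr (antiν (ρ x2 h1) h3))
                 (neg_eq_zero.mpr (antiν (ρ x3 h2) h1))))))))))
        rw [← total]; abel
  · rintro ⟨hμ, hν, hρ, hψ, haltμ, haltν, hbB, haltB, hjac⟩
    have antiμ : ∀ u v : G, μ u v + μ v u = 0 := fun u v => by
      rw [hμ.anti haltμ u v]; abel
    have antiν : ∀ u v : H, ν u v + ν v u = 0 := fun u v => by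
      rw [hν.anti haltν u v]; abel
    refine ⟨⟨hμ, haltμ, fun x y z => ?_⟩, ⟨hν, haltν, fun x y z => ?_⟩,
      ⟨hρ, fun x y h => ?_⟩, ⟨hψ, fun h h' x => ?_⟩, fun x h h' => ?_, fun h x y => ?_⟩
    · have j := hjac (x, 0) (y, 0) (z, 0)
      simp only [bicross, hμ.zl, hμ.zr, hν.zl, hν.zr, hρ.zl, hρ.zr, hψ.zl, hψ.zr,
        hμ.nl, hμ.nr, hν.nl, hν.nr, hρ.nl, hρ.nr, hψ.nl, hψ.nr,
        add_zero, zero_add, sub_zero, zero_sub, neg_zero, neg_neg, Prod.mk_add_mk,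
        Prod.mk_eq_zero] at j
      rw [← j.1]; try abel
    · have j := hjac (0, x) (0, y) (0, z)
      simp only [bicross, hμ.zl, hμ.zr, hν.zl, hν.zr, hρ.zl, hρ.zr, hψ.zl, hψ.zr,
        hμ.nl, hμ.nr, hν.nl, hν.nr, hρ.nl, hρ.nr, hψ.nl, hψ.nr,
        add_zero, zero_add, sub_zero, zero_sub, neg_zero, neg_neg, Prod.mk_add_mk,
        Prod.mk_eq_zero] at j
      rw [← j.2]; try abel
    · have j := hjac (x, 0) (y, 0) (0, h)
      simp only [bicross, hμ.zl, hμ.zr, hν.zl, hν.zr, hρ.zl, hρ.zr, hψ.zl, hψ.zr,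
        hμ.nl, hμ.nr, hν.nl, hν.nr, hρ.nl, hρ.nr, hψ.nl, hψ.nr,
        add_zero, zero_add, sub_zero, zero_sub, neg_zero, neg_neg, Prod.mk_add_mk,
        Prod.mk_eq_zero] at j
      rw [← sub_eq_zero, ← j.2]; try abel
    · have j := hjac (0, h) (0, h') (x, 0)
      simp only [bicross, hμ.zl, hμ.zr, hν.zl, hν.zr, hρ.zl, hρ.zr, hψ.zl, hψ.zr,
        hμ.nl, hμ.nr, hν.nl, hν.nr, hρ.nl, hρ.nr, hψ.nl, hψ.nr,
        add_zero, zero_add, sub_zero, zero_sub, neg_zero, neg_neg, Prod.mk_add_mk,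
        Prod.mk_eq_zero] at j
      rw [← sub_eq_zero, ← j.1]; try abel
    · have j := hjac (x, 0) (0, h) (0, h')
      simp only [bicross, hμ.zl, hμ.zr, hν.zl, hν.zr, hρ.zl, hρ.zr, hψ.zl, hψ.zr,
        hμ.nl, hμ.nr, hν.nl, hν.nr, hρ.nl, hρ.nr, hψ.nl, hψ.nr,
        add_zero, zero_add, sub_zero, zero_sub, neg_zero, neg_neg, Prod.mk_add_mk,
        Prod.mk_eq_zero] at j
      rw [← sub_eq_zero, ← neg_eq_zero.mpr (comb0 j.2 (antiν (ρ x h') h))]; try abel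
    · have j := hjac (0, h) (x, 0) (y, 0)
      simp only [bicross, hμ.zl, hμ.zr, hν.zl, hν.zr, hρ.zl, hρ.zr, hψ.zl, hψ.zr,
        hμ.nl, hμ.nr, hν.nl, hν.nr, hρ.nl, hρ.nr, hψ.nl, hψ.nr,
        add_zero, zero_add, sub_zero, zero_sub, neg_zero, neg_neg, Prod.mk_add_mk,
        Prod.mk_eq_zero] at j
      rw [← sub_eq_zero, ← neg_eq_zero.mpr (comb0 j.1 (antiμ (ψ h y) x))]; try abel

end E1
section E2

variable {k : Type*} [Field k]

lemma lie_transport {M N : Type*} [AddCommGroup M] [Module k M] [AddCommGroup N] [Module k N]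
    (e : M ≃ N) (hadd : ∀ u v, e (u + v) = e u + e v)
    (hsmul : ∀ (c : k) (u : M), e (c • u) = c • e u)
    (F : M → M → M) (F' : N → N → N) (h : ∀ u v, F' (e u) (e v) = e (F u v)) :
    IsLieBracketP k F → IsLieBracketP k F' := by
  rintro ⟨hb, halt, hjac⟩
  have hz : e 0 = 0 := by
    have := hadd 0 0; simpa using this.symm
  have hsa : ∀ u v, e.symm (u + v) = e.symm u + e.symm v := fun u v => by
    apply e.injective
    rw [Equiv.apply_symm_apply, hadd, Equiv.apply_symm_apply, Equiv.apply_symm_apply]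
  have hss : ∀ (c : k) u, e.symm (c • u) = c • e.symm u := fun c u => by
    apply e.injective
    rw [Equiv.apply_symm_apply, hsmul, Equiv.apply_symm_apply]
  have hF' : ∀ x y, F' x y = e (F (e.symm x) (e.symm y)) := fun x y => by
    rw [← h, Equiv.apply_symm_apply, Equiv.apply_symm_apply]
  refine ⟨⟨fun a a' b => ?_, fun c a b => ?_, fun a b b' => ?_, fun c a b => ?_⟩,
    fun x => ?_, fun x y z => ?_⟩
  · rw [hF', hF', hF', hsa, hb.1, hadd]
  · rw [hF', hF', hss, hb.2.1, hsmul]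
  · rw [hF', hF', hF', hsa, hb.2.2.1, hadd]
  · rw [hF', hF', hss, hb.2.2.2, hsmul]
  · rw [hF', halt, hz]
  · simp only [hF', Equiv.symm_apply_apply]
    rw [← hadd, ← hadd, hjac, hz]

variable {M : Type*} [AddCommGroup M] [Module k M]

lemma deform_bilin {A B C : Type*} [AddCommGroup A] [Module k A] [AddCommGroup B] [Module k B]
    [AddCommGroup C] [Module k C] {f f₁ : A → B → C} (hf : Bilin k f) (hf₁ : Bilin k f₁) :
    Bilin k (deform f f₁) := by
  refine ⟨fun a a' b => ?_, fun c a b => ?_, fun a b b' => ?_, fun c a b => ?_⟩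
  · simp only [deform, Prod.fst_add, Prod.snd_add, Prod.mk_add_mk, Prod.mk.injEq,
      hf.1, hf₁.1]
    exact ⟨trivial, by abel⟩
  · simp only [deform, Prod.smul_fst, Prod.smul_snd, Prod.smul_mk, Prod.mk.injEq,
      hf.2.1, hf₁.2.1, smul_add]
  · simp only [deform, Prod.fst_add, Prod.snd_add, Prod.mk_add_mk, Prod.mk.injEq,
      hf.2.2.1, hf₁.2.2.1]
    exact ⟨trivial, by abel⟩
  · simp only [deform, Prod.smul_fst, Prod.smul_snd, Prod.smul_mk, Prod.mk.injEq,
      hf.2.2.2, hf₁.2.2.2, smul_add]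

lemma deform_lie_iff (B B₁ : M → M → M) (hB : IsLieBracketP k B) (hb₁ : Bilin k B₁)
    (halt₁ : ∀ x, B₁ x x = 0) :
    IsLieBracketP k (deform B B₁) ↔
      ∀ x y z : M, B (B₁ x y) z + B₁ (B x y) z + (B (B₁ y z) x + B₁ (B y z) x) +
        (B (B₁ z x) y + B₁ (B z x) y) = 0 := by
  obtain ⟨hb, halt, hjac⟩ := hB
  have antiB : ∀ u v : M, B u v + B v u = 0 := fun u v => by
    rw [hb.anti halt u v]; abel
  constructor
  · rintro ⟨-, -, hdjac⟩ x y z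
    have j := hdjac (x, 0) (y, 0) (z, 0)
    simp only [deform, hb.zl, hb.zr, hb₁.zl, hb₁.zr, add_zero, zero_add,
      Prod.mk_add_mk, Prod.mk_eq_zero] at j
    rw [← j.2]; try abel
  · intro hL
    refine ⟨deform_bilin hb hb₁, fun a => ?_, fun a b c => ?_⟩
    · simp only [deform, Prod.mk_eq_zero]
      exact ⟨halt a.1, by rw [← comb0 (antiB a.1 a.2) (halt₁ a.1)]; try abel⟩
    · simp only [deform, hb.1, hb.2.2.1, Prod.mk_add_mk, Prod.mk_eq_zero]
      constructor
      · rw [← hjac a.1 b.1 c.1]; try abel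
      · have total :=
          comb0 (hjac a.1 b.1 c.2)
          (comb0 (hjac a.1 b.2 c.1)
          (comb0 (hjac a.2 b.1 c.1)
                 (hL a.1 b.1 c.1)))
        rw [← total]; try abel

end E2
section NR

open Equiv in
lemma insNR_eval {A : Type*} [AddCommGroup A] (f g : (Fin 2 → A) → A) (x : Fin 3 → A) :
    insNR 1 1 f g x
      = g ![f ![x 0, x 1], x 2] - g ![f ![x 0, x 2], x 1] + g ![f ![x 1, x 2], x 0] := by
  have huniv : (Finset.univ : Finset (Equiv.Perm (Fin 3)))
      = {1, swap 0 1, swap 0 2, swap 1 2, swap 0 1 * swap 1 2, swap 0 2 * swap 1 2} := by decide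
  have key : ∀ σ : Equiv.Perm (Fin 3),
      (Fin.cons (f (fun i : Fin 2 => x (σ ⟨i.1, by omega⟩)))
        (fun i : Fin 1 => x (σ ⟨1+1+(i:ℕ), by omega⟩)) : Fin 2 → A)
      = ![f ![x (σ 0), x (σ 1)], x (σ 2)] := by
    intro σ
    funext i
    fin_cases i
    · show f _ = f _
      congr 1
      funext j
      fin_cases j <;> rfl
    · rfl
  unfold insNR
  rw [huniv]
  rw [Finset.sum_insert (by decide), Finset.sum_insert (by decide), Finset.sum_insert (by decide),
    Finset.sum_insert (by decide), Finset.sum_insert (by decide), Finset.sum_singleton]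
  rw [if_pos (by decide), if_neg (by decide), if_neg (by decide), if_pos (by decide),
    if_pos (by decide), if_neg (by decide)]
  simp only [key]
  have s1 : ((Equiv.Perm.sign (1 : Equiv.Perm (Fin 3)) : ℤ)) = 1 := by decide
  have s2 : ((Equiv.Perm.sign (swap 1 2 : Equiv.Perm (Fin 3)) : ℤ)) = -1 := by decide
  have s3 : ((Equiv.Perm.sign (swap 0 1 * swap 1 2 : Equiv.Perm (Fin 3)) : ℤ)) = 1 := by decide
  rw [s1, s2, s3]
  have v1 : ∀ i : Fin 3, (1 : Equiv.Perm (Fin 3)) i = i := fun i => rfl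
  have v2a : (swap 1 2 : Equiv.Perm (Fin 3)) 0 = 0 := by decide
  have v2b : (swap 1 2 : Equiv.Perm (Fin 3)) 1 = 2 := by decide
  have v2c : (swap 1 2 : Equiv.Perm (Fin 3)) 2 = 1 := by decide
  have v3a : (swap 0 1 * swap 1 2 : Equiv.Perm (Fin 3)) 0 = 1 := by decide
  have v3b : (swap 0 1 * swap 1 2 : Equiv.Perm (Fin 3)) 1 = 2 := by decide
  have v3c : (swap 0 1 * swap 1 2 : Equiv.Perm (Fin 3)) 2 = 0 := by decide
  rw [v1, v1, v1, v2a, v2b, v2c, v3a, v3b, v3c]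
  simp only [one_smul, neg_smul]
  abel

lemma nrB_eval {A : Type*} [AddCommGroup A] (f g : (Fin 2 → A) → A) (x : Fin 3 → A) :
    nrB 1 1 f g x
      = (g ![f ![x 0, x 1], x 2] - g ![f ![x 0, x 2], x 1] + g ![f ![x 1, x 2], x 0])
        + (f ![g ![x 0, x 1], x 2] - f ![g ![x 0, x 2], x 1] + f ![g ![x 1, x 2], x 0]) := by
  have hx : (fun i : Fin (1+1+1) => x ⟨(i : ℕ), by omega⟩) = x := by
    funext i; congr
  unfold nrB
  rw [hx, insNR_eval, insNR_eval]
  norm_num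
  abel

end NR
section ASM

variable {k : Type*} [Field k] {G H : Type*} [AddCommGroup G] [Module k G]
    [AddCommGroup H] [Module k H]

/-- The shuffle equivalence `(G×H) × (G×H) ≃ (G×G) × (H×H)`. -/
def shEquiv : (G × H) × (G × H) ≃ (G × G) × (H × H) where
  toFun p := ((p.1.1, p.2.1), (p.1.2, p.2.2))
  invFun p := ((p.1.1, p.2.1), (p.1.2, p.2.2))
  left_inv p := rfl
  right_inv p := rfl

lemma bicross_bilin {μ : G → G → G} {ν : H → H → H} {ρ : G → H → H} {ψ : H → G → G}
    (hμ : Bilin k μ) (hν : Bilin k ν) (hρ : Bilin k ρ) (hψ : Bilin k ψ) :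
    Bilin k (bicross μ ν ρ ψ) := by
  refine ⟨fun a a' b => ?_, fun c a b => ?_, fun a b b' => ?_, fun c a b => ?_⟩
  · simp only [bicross, Prod.fst_add, Prod.snd_add, Prod.mk_add_mk, Prod.mk.injEq,
      hμ.1, hμ.2.2.1, hν.1, hν.2.2.1, hρ.1, hρ.2.2.1, hψ.1, hψ.2.2.1]
    constructor <;> abel
  · simp only [bicross, Prod.smul_fst, Prod.smul_snd, Prod.smul_mk, Prod.mk.injEq,
      hμ.2.1, hμ.2.2.2, hν.2.1, hν.2.2.2, hρ.2.1, hρ.2.2.2, hψ.2.1, hψ.2.2.2,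
      smul_add, smul_sub]
  · simp only [bicross, Prod.fst_add, Prod.snd_add, Prod.mk_add_mk, Prod.mk.injEq,
      hμ.1, hμ.2.2.1, hν.1, hν.2.2.1, hρ.1, hρ.2.2.1, hψ.1, hψ.2.2.1]
    constructor <;> abel
  · simp only [bicross, Prod.smul_fst, Prod.smul_snd, Prod.smul_mk, Prod.mk.injEq,
      hμ.2.1, hμ.2.2.2, hν.2.1, hν.2.2.2, hρ.2.1, hρ.2.2.2, hψ.2.1, hψ.2.2.2,
      smul_add, smul_sub]

lemma bicross_alt {μ : G → G → G} {ν : H → H → H} {ρ : G → H → H} {ψ : H → G → G}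
    (haltμ : ∀ x, μ x x = 0) (haltν : ∀ h, ν h h = 0) (a : G × H) :
    bicross μ ν ρ ψ a a = 0 := by
  simp only [bicross, Prod.mk_eq_zero]
  constructor
  · rw [haltμ]; abel
  · rw [haltν]; abel

lemma bicross_deform_compat (μ : G → G → G) (ν : H → H → H) (ρ : G → H → H) (ψ : H → G → G)
    (q1 : G → G → G) (q2 : H → H → H) (q3 : G → H → H) (q4 : H → G → G)
    (u v : (G × H) × (G × H)) :
    bicross (deform μ q1) (deform ν q2) (deform ρ q3) (deform ψ q4) (shEquiv u) (shEquiv v)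
      = shEquiv (deform (bicross μ ν ρ ψ) (bicross q1 q2 q3 q4) u v) := by
  simp only [Prod.ext_iff, shEquiv, Equiv.coe_fn_mk, bicross, deform,
    Prod.fst_add, Prod.snd_add, Prod.fst_sub, Prod.snd_sub]
  exact ⟨⟨trivial, by abel⟩, trivial, by abel⟩

lemma mcElt_pair (μ : G → G → G) (ν : H → H → H) (ρ : G → H → H) (ψ : H → G → G)
    (a b : G × H) : mcElt μ ν ρ ψ ![a, b] = bicross μ ν ρ ψ a b := by
  simp [mcElt]

lemma infdef_iff_cocycle (μ : G → G → G) (ν : H → H → H) (ρ : G → H → H) (ψ : H → G → G)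
    (hmp : IsMatchedPairP k μ ν ρ ψ) (q : Quad G H) :
    IsInfDef k μ ν ρ ψ q ↔ IsCocycleMPL k μ ν ρ ψ q := by
  obtain ⟨q1, q2, q3, q4⟩ := q
  unfold IsInfDef IsCocycleMPL
  apply and_congr_right
  rintro ⟨hb1, hb2, hb3, hb4, halt1, halt2⟩
  have hμ : Bilin k μ := hmp.1.1
  have hν : Bilin k ν := hmp.2.1.1
  have hρ : Bilin k ρ := hmp.2.2.1.1
  have hψ : Bilin k ψ := hmp.2.2.2.1.1
  have haltμ : ∀ x, μ x x = 0 := hmp.1.2.1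
  have haltν : ∀ x, ν x x = 0 := hmp.2.1.2.1
  have antiμ : ∀ u v : G, μ u v + μ v u = 0 := fun u v => by
    rw [hμ.anti haltμ u v]; abel
  have antiν : ∀ u v : H, ν u v + ν v u = 0 := fun u v => by
    rw [hν.anti haltν u v]; abel
  have hBlie : IsLieBracketP k (bicross μ ν ρ ψ) :=
    ((matched_iff_bicross μ ν ρ ψ).mp hmp).2.2.2.2.2.2
  have hbB : Bilin k (bicross μ ν ρ ψ) := hBlie.1
  have haltB : ∀ a, bicross μ ν ρ ψ a a = 0 := hBlie.2.1
  have hb₁ : Bilin k (bicross q1 q2 q3 q4) := bicross_bilin hb1 hb2 hb3 hb4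
  have halt₁ : ∀ a, bicross q1 q2 q3 q4 a a = 0 := bicross_alt halt1 halt2
  have step1 : IsMatchedPairP k (deform μ q1) (deform ν q2) (deform ρ q3) (deform ψ q4) ↔
      IsLieBracketP k (deform (bicross μ ν ρ ψ) (bicross q1 q2 q3 q4)) := by
    constructor
    · intro h
      have hLd := ((matched_iff_bicross (deform μ q1) (deform ν q2) (deform ρ q3)
        (deform ψ q4)).mp h).2.2.2.2.2.2
      refine lie_transport (k := k) shEquiv.symm (fun u v => rfl) (fun c u => by simp [shEquiv, Prod.smul_def])
        _ _ (fun u v => ?_) hLd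
      apply shEquiv.injective
      rw [Equiv.apply_symm_apply, ← bicross_deform_compat, Equiv.apply_symm_apply,
        Equiv.apply_symm_apply]
    · intro h
      refine (matched_iff_bicross _ _ _ _).mpr
        ⟨deform_bilin hμ hb1, deform_bilin hν hb2, deform_bilin hρ hb3, deform_bilin hψ hb4,
          fun a => ?_, fun a => ?_, ?_⟩
      · simp only [deform, Prod.mk_eq_zero]
        exact ⟨haltμ a.1, by rw [← comb0 (antiμ a.1 a.2) (halt1 a.1)]; try abel⟩
      · simp only [deform, Prod.mk_eq_zero]
        exact ⟨haltν a.1, by rw [← comb0 (antiν a.1 a.2) (halt2 a.1)]; try abel⟩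
      · exact lie_transport (k := k) shEquiv (fun u v => rfl) (fun c u => by simp [shEquiv, Prod.smul_def])
          _ _ (fun u v => bicross_deform_compat μ ν ρ ψ q1 q2 q3 q4 u v) h
  have step2 := deform_lie_iff (k := k) (bicross μ ν ρ ψ) (bicross q1 q2 q3 q4)
    hBlie hb₁ halt₁
  have hnr : ∀ x : Fin 3 → G × H,
      nrB 1 1 (mcElt μ ν ρ ψ) (mcElt q1 q2 q3 q4) x
        = bicross μ ν ρ ψ (bicross q1 q2 q3 q4 (x 0) (x 1)) (x 2)
          + bicross q1 q2 q3 q4 (bicross μ ν ρ ψ (x 0) (x 1)) (x 2)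
          + (bicross μ ν ρ ψ (bicross q1 q2 q3 q4 (x 1) (x 2)) (x 0)
            + bicross q1 q2 q3 q4 (bicross μ ν ρ ψ (x 1) (x 2)) (x 0))
          + (bicross μ ν ρ ψ (bicross q1 q2 q3 q4 (x 2) (x 0)) (x 1)
            + bicross q1 q2 q3 q4 (bicross μ ν ρ ψ (x 2) (x 0)) (x 1)) := by
    intro x
    rw [nrB_eval]
    simp only [mcElt_pair]
    rw [show bicross μ ν ρ ψ (x 2) (x 0) = - bicross μ ν ρ ψ (x 0) (x 2) from
        hbB.anti haltB _ _,
      show bicross q1 q2 q3 q4 (x 2) (x 0) = - bicross q1 q2 q3 q4 (x 0) (x 2) from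
        hb₁.anti halt₁ _ _,
      hbB.nl, hb₁.nl]
    abel
  rw [step1, step2]
  constructor
  · intro hL x
    rw [hnr x]
    exact hL (x 0) (x 1) (x 2)
  · intro hn u v w
    have h := hn ![u, v, w]
    rw [hnr] at h
    simpa using h

end ASM
/-- Two infinitesimal deformations of a matched pair of Lie algebras are
equivalent iff the corresponding `2`-cocycles are cohomologous (their difference being
`δ_MPL((f,g))`); hence equivalence classes of infinitesimal deformations are in bijection
with `H²_MPL(𝔤, 𝔥, ρ, ψ)`. -/
theorem deformations_classified_by_H2
    (k : Type*) [Field k] [CharZero k] {G H : Type*}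
    [AddCommGroup G] [Module k G] [AddCommGroup H] [Module k H]
    (μ : G → G → G) (ν : H → H → H) (ρ : G → H → H) (ψ : H → G → G)
    (hmp : IsMatchedPairP k μ ν ρ ψ) :
    (∀ q q' : Quad G H, IsInfDef k μ ν ρ ψ q → IsInfDef k μ ν ρ ψ q' →
      (DefEquiv k μ ν ρ ψ q q' ↔ CohomologousMPL k μ ν ρ ψ q q')) ∧
    (∃ e : Quot (fun d d' : {q : Quad G H // IsInfDef k μ ν ρ ψ q} =>
              DefEquiv k μ ν ρ ψ d.1 d'.1) ≃
           Quot (fun c c' : {q : Quad G H // IsCocycleMPL k μ ν ρ ψ q} =>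
              CohomologousMPL k μ ν ρ ψ c.1 c'.1),
      ∀ (d : {q : Quad G H // IsInfDef k μ ν ρ ψ q})
        (c : {q : Quad G H // IsCocycleMPL k μ ν ρ ψ q}),
        d.1 = c.1 → e (Quot.mk _ d) = Quot.mk _ c) := by
  have part1 : ∀ q q' : Quad G H,
      DefEquiv k μ ν ρ ψ q q' ↔ CohomologousMPL k μ ν ρ ψ q q' :=
    fun q q' => defEquiv_iff_cohomologous μ ν ρ ψ hmp q q'
  have hiff : ∀ q : Quad G H, IsInfDef k μ ν ρ ψ q ↔ IsCocycleMPL k μ ν ρ ψ q :=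
    infdef_iff_cocycle μ ν ρ ψ hmp
  refine ⟨fun q q' _ _ => part1 q q',
    ⟨Quot.congr (Equiv.subtypeEquivRight hiff) (fun a b => by simpa using part1 a.1 b.1),
      fun d c hdc => ?_⟩⟩
  have hde : Equiv.subtypeEquivRight hiff d = c := Subtype.ext hdc
  show Quot.mk _ (Equiv.subtypeEquivRight hiff d) = Quot.mk _ c
  exact congrArg _ hde
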